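/- Let P be a polynomial generic representation over a finite field K with P(0) = 0. Then the full subset X := P is irreducible: whenever X = X₁ ∪ X₂ for restriction-closed subsets X₁, X₂ of P, we have X = X₁ or X = X₂. Specifically, if T₁ ∈ P(V₁) is forbidden for X₁ and T₂ ∈ P(V₂) is forbidden for X₂, then T := P(ι₁)T₁ + P(ι₂)T₂ ∈ P(V₁ ⊕ V₂) has both T₁ and T₂ as restrictions, contradicting T ∈ X₁(V₁ ⊕ V₂) ∪ X₂(V₁ ⊕ V₂). -/

import Mathlib

/-- A generic representation over `K`, presented on the skeleton `n ↦ K^n` of the category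
of finite-dimensional `K`-vector spaces: a functor `Vec → Vec`. -/
structure GenRep (K : Type) [Field K] where
  obj : ℕ → Type
  [addcg : ∀ n, AddCommGroup (obj n)]
  [mod : ∀ n, Module K (obj n)]
  map : ∀ {m n : ℕ}, ((Fin m → K) →ₗ[K] (Fin n → K)) → (obj m →ₗ[K] obj n)
  map_id : ∀ n : ℕ, map (LinearMap.id : (Fin n → K) →ₗ[K] (Fin n → K)) = LinearMap.id
  map_comp : ∀ {m n p : ℕ} (φ : (Fin m → K) →ₗ[K] (Fin n → K))
    (ψ : (Fin n → K) →ₗ[K] (Fin p → K)), map (ψ ∘ₗ φ) = map ψ ∘ₗ map φ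

attribute [instance] GenRep.addcg GenRep.mod

variable {K : Type} [Field K]

/-- `f : (α → K) → W` is (given by) a polynomial of (total) degree at most `e` in the
coordinates, with coefficients in the `K`-module `W`.  For `e = -1` this forces `f = 0`. -/
def PolyDeg (K : Type) [Field K] {α : Type} [Fintype α] {W : Type} [AddCommGroup W]
    [Module K W] (e : ℤ) (f : (α → K) → W) : Prop :=
  ∃ (s : Finset (α →₀ ℕ)) (c : (α →₀ ℕ) → W),
    (∀ m ∈ s, ((m.sum fun _ k => k : ℕ) : ℤ) ≤ e) ∧
    ∀ x : α → K, f x = ∑ m ∈ s, (∏ a ∈ m.support, x a ^ m a) • c m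

/-- A generic representation has degree at most `e` if all its maps
`Hom(K^m, K^n) → Hom(P(K^m), P(K^n))` are polynomial of degree `≤ e` in the matrix entries. -/
def GenRep.HasDegLE (P : GenRep K) (e : ℤ) : Prop :=
  ∀ m n : ℕ, PolyDeg K e (fun x : Fin n × Fin m → K =>
    P.map ((Matrix.of fun i j => x (i, j)).mulVecLin))

/-- A generic representation is polynomial if it has some finite degree. -/
def GenRep.IsPoly (P : GenRep K) : Prop := ∃ e : ℤ, P.HasDegLE e

/-- `P` has degree exactly `d`. -/
def GenRep.IsDegree (P : GenRep K) (d : ℤ) : Prop :=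
  P.HasDegLE d ∧ ∀ e : ℤ, P.HasDegLE e → d ≤ e

/-- A subrepresentation of a generic representation. -/
structure SubRep (P : GenRep K) where
  carrier : ∀ n : ℕ, Submodule K (P.obj n)
  stable : ∀ {m n : ℕ} (φ : (Fin m → K) →ₗ[K] (Fin n → K)),
    ∀ x ∈ carrier m, P.map φ x ∈ carrier n

/-- The quotient representation `P/N` has degree at most `e`; expressed via the composites
`mkQ ∘ P(φ)`, which present the maps of `P/N`. -/
def QuotDegLE (P : GenRep K) (N : SubRep P) (e : ℤ) : Prop :=
  ∀ m n : ℕ, PolyDeg K e (fun x : Fin n × Fin m → K =>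
    (N.carrier n).mkQ ∘ₗ P.map ((Matrix.of fun i j => x (i, j)).mulVecLin))

/-- `N` is the top part `P_{>e}`: the inclusion-wise minimal subrepresentation of `P` whose
quotient has degree at most `e`. -/
def IsTopPart (P : GenRep K) (e : ℤ) (N : SubRep P) : Prop :=
  QuotDegLE P N e ∧ ∀ N' : SubRep P, QuotDegLE P N' e → ∀ n, N.carrier n ≤ N'.carrier n

/-- A morphism (natural transformation) of generic representations. -/
structure RepHom (P Q : GenRep K) where
  app : ∀ n : ℕ, P.obj n →ₗ[K] Q.obj n
  natural : ∀ {m n : ℕ} (φ : (Fin m → K) →ₗ[K] (Fin n → K)),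
    app n ∘ₗ P.map φ = Q.map φ ∘ₗ app m

/-- A (restriction-closed) subset of a generic representation `P`: a subset `X(V) ⊆ P(V)`
for each `V`, stable under all maps `P(φ)`. -/
structure RepSubset (P : GenRep K) where
  carrier : ∀ n : ℕ, Set (P.obj n)
  stable : ∀ {m n : ℕ} (φ : (Fin m → K) →ₗ[K] (Fin n → K)),
    ∀ x ∈ carrier m, P.map φ x ∈ carrier n

/-- If `P` is a polynomial generic representation over a finite field with `P(0) = 0`, then
the full subset `X := P` is irreducible: whenever `P = X₁ ∪ X₂` for restriction-closed
subsets `X₁, X₂`, one of them is all of `P`. -/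
theorem stmt19 (K : Type) [Field K] [Fintype K] (P : GenRep K) (hP : P.IsPoly)
    (h0 : ∀ x : P.obj 0, x = 0)
    (X₁ X₂ : RepSubset P)
    (hcover : ∀ n : ℕ, X₁.carrier n ∪ X₂.carrier n = Set.univ) :
    (∀ n : ℕ, X₁.carrier n = Set.univ) ∨ (∀ n : ℕ, X₂.carrier n = Set.univ) := by
  -- P of the zero map kills everything, since the zero map factors through K^0
  have hzero : ∀ (a b : ℕ) (y : P.obj a),
      P.map (0 : (Fin a → K) →ₗ[K] (Fin b → K)) y = 0 := by
    intro a b y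
    have hfac : (0 : (Fin a → K) →ₗ[K] (Fin b → K)) =
        (0 : (Fin 0 → K) →ₗ[K] (Fin b → K)) ∘ₗ (0 : (Fin a → K) →ₗ[K] (Fin 0 → K)) := by
      ext x i; simp
    rw [hfac, P.map_comp]
    simp only [LinearMap.comp_apply]
    rw [h0 (P.map (0 : (Fin a → K) →ₗ[K] (Fin 0 → K)) y), map_zero]
  by_contra hcon
  push_neg at hcon
  obtain ⟨⟨n₁, h1⟩, ⟨n₂, h2⟩⟩ := hcon
  obtain ⟨T₁, hT₁⟩ : ∃ T₁, T₁ ∉ X₁.carrier n₁ := by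
    by_contra h; push_neg at h; exact h1 (Set.eq_univ_of_forall h)
  obtain ⟨T₂, hT₂⟩ : ∃ T₂, T₂ ∉ X₂.carrier n₂ := by
    by_contra h; push_neg at h; exact h2 (Set.eq_univ_of_forall h)
  -- canonical injections and projections for K^{n₁} ⊕ K^{n₂}
  let π₁ : (Fin (n₁ + n₂) → K) →ₗ[K] (Fin n₁ → K) := LinearMap.funLeft K K (Fin.castAdd n₂)
  let π₂ : (Fin (n₁ + n₂) → K) →ₗ[K] (Fin n₂ → K) := LinearMap.funLeft K K (Fin.natAdd n₁)
  let ι₁ : (Fin n₁ → K) →ₗ[K] (Fin (n₁ + n₂) → K) :=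
    LinearMap.pi (fun i => Fin.addCases (fun j => LinearMap.proj j) (fun _ => 0) i)
  let ι₂ : (Fin n₂ → K) →ₗ[K] (Fin (n₁ + n₂) → K) :=
    LinearMap.pi (fun i => Fin.addCases (fun _ => 0) (fun j => LinearMap.proj j) i)
  have hπι₁ : π₁ ∘ₗ ι₁ = LinearMap.id := by
    ext x j
    simp [π₁, ι₁, LinearMap.funLeft, LinearMap.pi_apply]
  have hπι₂ : π₂ ∘ₗ ι₂ = LinearMap.id := by
    ext x j
    simp [π₂, ι₂, LinearMap.funLeft, LinearMap.pi_apply]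
  have hπι₁₂ : π₁ ∘ₗ ι₂ = 0 := by
    ext x j
    simp [π₁, ι₂, LinearMap.funLeft, LinearMap.pi_apply]
  have hπι₂₁ : π₂ ∘ₗ ι₁ = 0 := by
    ext x j
    simp [π₂, ι₁, LinearMap.funLeft, LinearMap.pi_apply]
  set T : P.obj (n₁ + n₂) := P.map ι₁ T₁ + P.map ι₂ T₂ with hT
  have hres₁ : P.map π₁ T = T₁ := by
    have e1 : P.map π₁ (P.map ι₁ T₁) = T₁ := by
      rw [← LinearMap.comp_apply, ← P.map_comp, hπι₁, P.map_id]; rfl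
    have e2 : P.map π₁ (P.map ι₂ T₂) = 0 := by
      rw [← LinearMap.comp_apply, ← P.map_comp, hπι₁₂]; exact hzero _ _ T₂
    rw [hT, map_add, e1, e2, add_zero]
  have hres₂ : P.map π₂ T = T₂ := by
    have e1 : P.map π₂ (P.map ι₂ T₂) = T₂ := by
      rw [← LinearMap.comp_apply, ← P.map_comp, hπι₂, P.map_id]; rfl
    have e2 : P.map π₂ (P.map ι₁ T₁) = 0 := by
      rw [← LinearMap.comp_apply, ← P.map_comp, hπι₂₁]; exact hzero _ _ T₁
    rw [hT, map_add, e2, e1, zero_add]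
  have hTmem : T ∈ X₁.carrier (n₁ + n₂) ∪ X₂.carrier (n₁ + n₂) := by
    rw [hcover]; trivial
  rcases hTmem with hmem | hmem
  · exact hT₁ (hres₁ ▸ X₁.stable π₁ T hmem)
  · exact hT₂ (hres₂ ▸ X₂.stable π₂ T hmem)
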